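/- arXiv:2511.19983 — 2 statements merged into one kernel-verified Lean document; each statement's English description precedes it below -/
import Mathlib

section
/- For every real θ with |sin θ| ≤ 1 and every k ≥ 2, let φ(θ) = arcsin( sin^k θ / √(cos^{2k} θ + sin^{2k} θ) ). Then there exists a constant C (depending on k) such that |φ(θ) − θ^k| ≤ C·|θ|^{k+2} for all θ with |θ| ≤ 1/2. -/
open Real

lemma sin_approx' {y : ℝ} (hy : |y| ≤ 1) : |Real.sin y - y| ≤ |y| ^ 3 := by
  rcases lt_trichotomy y 0 with h | h | h
  · have h1 : Real.sin (-y) < -y := Real.sin_lt (by linarith)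
    have h2 : (-y) - (-y) ^ 3 / 4 < Real.sin (-y) := by
      have h' := Real.sin_gt_sub_cube (by linarith : (0:ℝ) < -y)
      have := pow_pos (neg_pos.mpr h) 3
      linarith
    rw [Real.sin_neg] at h1 h2
    have hy3 : y ^ 3 ≤ 0 := by nlinarith [sq_nonneg y]
    rw [abs_of_neg h, abs_of_pos (by linarith : (0:ℝ) < Real.sin y - y)]
    nlinarith
  · simp [h]
  · have h1 : Real.sin y < y := Real.sin_lt h
    have h2 : y - y ^ 3 / 4 < Real.sin y := by
      have h' := Real.sin_gt_sub_cube h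
      have := pow_pos h 3
      linarith
    have hy3 : 0 ≤ y ^ 3 := by positivity
    rw [abs_of_pos h, abs_sub_comm, abs_of_pos (by linarith)]
    nlinarith

lemma arcsin_approx' {x : ℝ} (hx : |x| ≤ 1 / 2) : |Real.arcsin x - x| ≤ |x| ^ 3 := by
  have key : ∀ z : ℝ, 0 ≤ z → z ≤ 1 / 2 → z ≤ Real.arcsin z ∧ Real.arcsin z ≤ z + z ^ 3 := by
    intro z hz0 hz1
    constructor
    · have h1 : Real.sin (Real.arcsin z) = z := Real.sin_arcsin (by linarith) (by linarith)
      have h2 : Real.sin (Real.arcsin z) ≤ Real.arcsin z := by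
        rcases eq_or_lt_of_le (Real.arcsin_nonneg.mpr hz0) with h | h
        · rw [← h]; simp
        · exact (Real.sin_lt h).le
      linarith
    · rcases eq_or_lt_of_le hz0 with h | h
      · rw [← h]; simp
      · have hz2 : z ^ 2 ≤ 1 / 4 := by nlinarith
        have h4 : z ^ 4 ≤ 1 / 16 := by nlinarith [sq_nonneg (z^2)]
        have h6 : z ^ 6 ≤ 1 / 64 := by nlinarith [pow_pos h 2, pow_pos h 4]
        have hz3 : z + z ^ 3 ≤ 1 := by nlinarith
        have hpos : 0 ≤ z ^ 3 := by positivity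
        have hmul : 0 ≤ z ^ 3 * (3 - 3 * z ^ 2 - 3 * z ^ 4 - z ^ 6) :=
          mul_nonneg hpos (by linarith)
        have hcube : (z + z ^ 3) ^ 3 ≤ 4 * z ^ 3 := by nlinarith [hmul]
        have hsin := Real.sin_gt_sub_cube (by positivity : 0 < z + z ^ 3)
        have h2 : z ≤ Real.sin (z + z ^ 3) := by linarith
        calc Real.arcsin z ≤ Real.arcsin (Real.sin (z + z ^ 3)) := Real.monotone_arcsin h2
          _ = z + z ^ 3 := Real.arcsin_sin
              (by nlinarith [Real.pi_gt_three]) (by nlinarith [Real.pi_gt_three])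
  rcases le_or_gt 0 x with h | h
  · obtain ⟨h1, h2⟩ := key x h (by rwa [abs_of_nonneg h] at hx)
    rw [abs_of_nonneg h, abs_of_nonneg (by linarith)]; linarith
  · obtain ⟨h1, h2⟩ := key (-x) (by linarith) (by rwa [abs_of_neg h] at hx)
    rw [Real.arcsin_neg] at h1 h2
    rw [abs_of_neg h, abs_of_nonpos (by linarith)]; linarith

lemma pow_sub_pow_abs_le (a b M : ℝ) (ha : |a| ≤ M) (hb : |b| ≤ M) :
    ∀ n : ℕ, |a ^ n - b ^ n| ≤ n * M ^ (n - 1) * |a - b| := by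
  intro n
  induction n with
  | zero => simp
  | succ n ih =>
    have hM : 0 ≤ M := le_trans (abs_nonneg a) ha
    have key : a ^ (n+1) - b ^ (n+1) = a * (a ^ n - b ^ n) + (a - b) * b ^ n := by ring
    calc |a ^ (n+1) - b ^ (n+1)| ≤ |a| * |a ^ n - b ^ n| + |a - b| * |b| ^ n := by
          rw [key]; refine le_trans (abs_add_le _ _) ?_
          rw [abs_mul, abs_mul, abs_pow]
      _ ≤ M * (n * M ^ (n - 1) * |a - b|) + |a - b| * M ^ n := by
          gcongr <;> first | exact abs_nonneg _ | skip
      _ ≤ (↑(n + 1)) * M ^ (n + 1 - 1) * |a - b| := by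
          rcases Nat.eq_zero_or_pos n with h | h
          · subst h; simp
          · have hMM : M * M ^ (n - 1) = M ^ n := by
              rw [mul_comm, ← pow_succ]; congr 1; omega
            push_cast
            exact le_of_eq (by rw [← hMM]; ring)




set_option maxHeartbeats 1600000 in
/-- The effective logical angle `φ(θ) = arcsin( sinᵏθ / √(cos^{2k}θ + sin^{2k}θ) )` of the
projection scheme satisfies `|φ(θ) - θᵏ| ≤ C |θ|^{k+2}` for `|θ| ≤ 1/2`. -/
theorem effective_angle_approx (k : ℕ) (hk : 2 ≤ k) :
    ∃ C : ℝ, ∀ θ : ℝ, |θ| ≤ 1 / 2 →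
      |Real.arcsin (Real.sin θ ^ k /
          Real.sqrt (Real.cos θ ^ (2 * k) + Real.sin θ ^ (2 * k))) - θ ^ k|
        ≤ C * |θ| ^ (k + 2) := by
  refine ⟨(8/7 : ℝ) ^ (3 * k) + ((k : ℝ) + 1) * (8/7 : ℝ) ^ k + (k : ℝ), ?_⟩
  intro θ hθ
  set s := Real.sin θ with hs_def
  set c := Real.cos θ with hc_def
  have hs : |s| ≤ |θ| := Real.abs_sin_le_abs
  have hsθ : |s| ≤ 1/2 := le_trans hs hθ
  have hθ1 : |θ| ≤ 1 := le_trans hθ (by norm_num)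
  have hθsq : θ ^ 2 ≤ 1/4 := by
    rw [← sq_abs]; nlinarith [abs_nonneg θ]
  have hc : (7:ℝ)/8 ≤ c := by
    have := Real.one_sub_sq_div_two_le_cos (x := θ)
    linarith
  have hc0 : (0:ℝ) < c := by linarith
  have hck : ((7:ℝ)/8) ^ k ≤ c ^ k := pow_le_pow_left₀ (by norm_num) hc k
  have hck0 : (0:ℝ) < ((7:ℝ)/8) ^ k := by positivity
  have hs2k : s ^ (2 * k) = (s ^ 2) ^ k := by rw [pow_mul]
  have hc2k : c ^ (2 * k) = (c ^ 2) ^ k := by rw [pow_mul]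
  have hEnn : (0:ℝ) ≤ c ^ (2 * k) + s ^ (2 * k) := by
    rw [hs2k, hc2k]; positivity
  set D := Real.sqrt (c ^ (2 * k) + s ^ (2 * k)) with hD_def
  have hDc : c ^ k ≤ D := by
    rw [hD_def, Real.le_sqrt (by positivity) hEnn]
    rw [← pow_mul, mul_comm]
    have : (0:ℝ) ≤ s ^ (2 * k) := by rw [hs2k]; positivity
    linarith
  have hD1 : ((7:ℝ)/8) ^ k ≤ D := le_trans hck hDc
  have hD0 : (0:ℝ) < D := lt_of_lt_of_le hck0 hD1
  have hD2 : D ^ 2 = c ^ (2 * k) + s ^ (2 * k) := Real.sq_sqrt hEnn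
  set x := s ^ k / D with hx_def
  -- bound on |x|
  have habs_x : |x| = |s| ^ k / D := by
    rw [hx_def, abs_div, abs_pow, abs_of_pos hD0]
  have hsk : |s| ^ k ≤ |θ| ^ k := pow_le_pow_left₀ (abs_nonneg s) hs k
  have hx_le : |x| ≤ (8/7 : ℝ) ^ k * |θ| ^ k := by
    rw [habs_x]
    rw [div_le_iff₀ hD0]
    calc |s| ^ k ≤ |θ| ^ k := hsk
      _ = (8/7 : ℝ) ^ k * |θ| ^ k * ((7:ℝ)/8) ^ k := by
          have h1 : ((8:ℝ)/7) ^ k * ((7:ℝ)/8) ^ k = 1 := by rw [← mul_pow]; norm_num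
          linear_combination (-(|θ| ^ k)) * h1
      _ ≤ (8/7 : ℝ) ^ k * |θ| ^ k * D := by
          gcongr <;> positivity
  have hx_half : |x| ≤ 1/2 := by
    calc |x| ≤ (8/7 : ℝ) ^ k * |θ| ^ k := hx_le
      _ ≤ (8/7 : ℝ) ^ k * (1/2) ^ k := by
          gcongr <;> positivity
      _ = ((4:ℝ)/7) ^ k := by rw [← mul_pow]; norm_num
      _ ≤ ((4:ℝ)/7) ^ 2 := pow_le_pow_of_le_one (by norm_num) (by norm_num) hk
      _ ≤ 1/2 := by norm_num
  -- Term 1 : |arcsin x - x| ≤ (8/7)^(3k) * |θ|^(k+2)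
  have hθ3k : |θ| ^ (3 * k) ≤ |θ| ^ (k + 2) :=
    pow_le_pow_of_le_one (abs_nonneg θ) hθ1 (by omega)
  have hT1 : |Real.arcsin x - x| ≤ (8/7 : ℝ) ^ (3 * k) * |θ| ^ (k + 2) := by
    calc |Real.arcsin x - x| ≤ |x| ^ 3 := arcsin_approx' hx_half
      _ ≤ ((8/7 : ℝ) ^ k * |θ| ^ k) ^ 3 := pow_le_pow_left₀ (abs_nonneg x) hx_le 3
      _ = (8/7 : ℝ) ^ (3 * k) * |θ| ^ (3 * k) := by
          rw [mul_pow, ← pow_mul, ← pow_mul, mul_comm k 3]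
      _ ≤ (8/7 : ℝ) ^ (3 * k) * |θ| ^ (k + 2) :=
          mul_le_mul_of_nonneg_left hθ3k (by positivity)
  -- Term 2 : |x - s^k| ≤ (k+1) * (8/7)^k * |θ|^(k+2)
  have hsq : s ^ 2 + c ^ 2 = 1 := Real.sin_sq_add_cos_sq θ
  have hs2 : s ^ 2 ≤ θ ^ 2 := by
    rw [← sq_abs s, ← sq_abs θ]; exact pow_le_pow_left₀ (abs_nonneg s) hs 2
  have hBern : 1 - (k : ℝ) * s ^ 2 ≤ c ^ (2 * k) := by
    have h := one_add_mul_le_pow (a := -s ^ 2) (by nlinarith [sq_nonneg s]) k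
    rw [hc2k]
    have hcs : c ^ 2 = 1 + -s ^ 2 := by linarith
    rw [hcs]
    calc 1 - (k:ℝ) * s ^ 2 = 1 + (k:ℝ) * (-s ^ 2) := by ring
      _ ≤ (1 + -s ^ 2) ^ k := h
  have hc2k_le : c ^ (2 * k) ≤ 1 := by
    rw [hc2k]
    exact pow_le_one₀ (sq_nonneg c) (by nlinarith [sq_nonneg s])
  have hs2k_le : s ^ (2 * k) ≤ s ^ 2 := by
    calc s ^ (2 * k) = |s| ^ (2 * k) := by
          rw [← abs_pow, hs2k, abs_of_nonneg (by positivity)]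
      _ ≤ |s| ^ 2 := pow_le_pow_of_le_one (abs_nonneg s) (by linarith) (by omega)
      _ = s ^ 2 := sq_abs s
  have hs2k_nn : (0:ℝ) ≤ s ^ (2 * k) := by rw [hs2k]; positivity
  have h1D2 : |1 - D ^ 2| ≤ ((k:ℝ) + 1) * θ ^ 2 := by
    have hks : (k:ℝ) * s ^ 2 ≤ (k:ℝ) * θ ^ 2 :=
      mul_le_mul_of_nonneg_left hs2 (Nat.cast_nonneg k)
    have hkθ : (0:ℝ) ≤ (k:ℝ) * θ ^ 2 :=
      mul_nonneg (Nat.cast_nonneg k) (sq_nonneg θ)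
    rw [hD2, abs_le]
    constructor
    · linarith [sq_nonneg θ]
    · linarith [sq_nonneg θ]
  have h1D : |1 - D| ≤ ((k:ℝ) + 1) * θ ^ 2 := by
    have hfac : |1 - D ^ 2| = |1 - D| * |1 + D| := by
      rw [← abs_mul]; congr 1; ring
    have h1p : (1:ℝ) ≤ |1 + D| := by rw [abs_of_pos (by linarith)]; linarith
    nlinarith [abs_nonneg (1 - D)]
  have hT2 : |x - s ^ k| ≤ ((k:ℝ) + 1) * (8/7 : ℝ) ^ k * |θ| ^ (k + 2) := by
    have hrw : x - s ^ k = s ^ k * (1 - D) / D := by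
      rw [hx_def]; field_simp
    rw [hrw, abs_div, abs_mul, abs_pow, abs_of_pos hD0, div_le_iff₀ hD0]
    calc |s| ^ k * |1 - D| ≤ |θ| ^ k * (((k:ℝ) + 1) * θ ^ 2) := by
          apply mul_le_mul hsk h1D (abs_nonneg _) (by positivity)
      _ = ((k:ℝ) + 1) * |θ| ^ (k + 2) := by
          rw [← sq_abs θ]; ring
      _ = ((k:ℝ) + 1) * (8/7 : ℝ) ^ k * |θ| ^ (k + 2) * ((7:ℝ)/8) ^ k := by
          have h1 : ((8:ℝ)/7) ^ k * ((7:ℝ)/8) ^ k = 1 := by rw [← mul_pow]; norm_num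
          linear_combination (-((k:ℝ) + 1) * |θ| ^ (k + 2)) * h1
      _ ≤ ((k:ℝ) + 1) * (8/7 : ℝ) ^ k * |θ| ^ (k + 2) * D := by
          gcongr <;> positivity
  -- Term 3 : |s^k - θ^k| ≤ k * |θ|^(k+2)
  have hT3 : |s ^ k - θ ^ k| ≤ (k : ℝ) * |θ| ^ (k + 2) := by
    calc |s ^ k - θ ^ k| ≤ (k : ℝ) * |θ| ^ (k - 1) * |s - θ| :=
          pow_sub_pow_abs_le s θ |θ| hs (le_refl _) k
      _ ≤ (k : ℝ) * |θ| ^ (k - 1) * |θ| ^ 3 := by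
          gcongr <;> first | exact sin_approx' hθ1 | positivity
      _ = (k : ℝ) * |θ| ^ (k + 2) := by
          rw [mul_assoc, ← pow_add]
          congr 2
          omega
  -- combine
  have htri : |Real.arcsin x - θ ^ k| ≤
      |Real.arcsin x - x| + |x - s ^ k| + |s ^ k - θ ^ k| := by
    calc |Real.arcsin x - θ ^ k|
        = |(Real.arcsin x - x) + (x - s ^ k) + (s ^ k - θ ^ k)| := by ring_nf
      _ ≤ |(Real.arcsin x - x) + (x - s ^ k)| + |s ^ k - θ ^ k| := abs_add_le _ _
      _ ≤ |Real.arcsin x - x| + |x - s ^ k| + |s ^ k - θ ^ k| := by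
          gcongr; exact abs_add_le _ _
  calc |Real.arcsin x - θ ^ k|
      ≤ |Real.arcsin x - x| + |x - s ^ k| + |s ^ k - θ ^ k| := htri
    _ ≤ (8/7 : ℝ) ^ (3*k) * |θ| ^ (k+2) + ((k:ℝ)+1) * (8/7:ℝ) ^ k * |θ| ^ (k+2)
        + (k:ℝ) * |θ| ^ (k+2) := by gcongr <;> first | exact hT1 | exact hT2 | exact hT3
    _ = ((8/7 : ℝ) ^ (3 * k) + ((k : ℝ) + 1) * (8/7 : ℝ) ^ k + (k : ℝ)) * |θ| ^ (k + 2) := by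
        ring
end

section
/- Let Z be the Pauli Z matrix, 0 ≤ P < 1/2, and Δ ∈ ℝ. Define channels E(ρ) = (1−P)ρ + P e^{iΔZ}ρe^{−iΔZ} and C(ρ) = (1−P)ρ + P e^{−iΔZ}ρe^{iΔZ} on 2×2 complex matrices. Then for every 2×2 matrix ρ, C(E(ρ)) = (1 − 2P(1−P)sin²Δ)·ρ + 2P(1−P)sin²Δ · ZρZ. -/
open Matrix NormedSpace

/-- The Pauli `Z` matrix. -/
def PauliZ : Matrix (Fin 2) (Fin 2) ℂ := !![1, 0; 0, -1]

/-- The stochastic over-rotation error channel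
`E(ρ) = (1-P) ρ + P e^{iΔZ} ρ e^{-iΔZ}`. -/
noncomputable def overRot (P Δ : ℝ) (ρ : Matrix (Fin 2) (Fin 2) ℂ) :
    Matrix (Fin 2) (Fin 2) ℂ :=
  ((1 - P : ℝ) : ℂ) • ρ +
    (P : ℂ) • (NormedSpace.exp ((Complex.I * (Δ : ℂ)) • PauliZ) * ρ *
      NormedSpace.exp ((-(Complex.I * (Δ : ℂ))) • PauliZ))

/-- The compensation channel `C(ρ) = (1-P) ρ + P e^{-iΔZ} ρ e^{iΔZ}`. -/
noncomputable def compRot (P Δ : ℝ) (ρ : Matrix (Fin 2) (Fin 2) ℂ) :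
    Matrix (Fin 2) (Fin 2) ℂ :=
  ((1 - P : ℝ) : ℂ) • ρ +
    (P : ℂ) • (NormedSpace.exp ((-(Complex.I * (Δ : ℂ))) • PauliZ) * ρ *
      NormedSpace.exp ((Complex.I * (Δ : ℂ)) • PauliZ))

lemma exp_smul_pauliZ (c : ℂ) :
    NormedSpace.exp (c • PauliZ) = !![Complex.exp c, 0; 0, Complex.exp (-c)] := by
  have h : c • PauliZ = diagonal ![c, -c] := by
    ext i j; fin_cases i <;> fin_cases j <;> simp [PauliZ, diagonal]
  rw [h, Matrix.exp_diagonal]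
  ext i j; fin_cases i <;> fin_cases j <;> simp [diagonal, ← Complex.exp_eq_exp_ℂ]

/-- Coherent error cancellation: composing the over-rotation channel with the compensation
channel gives an exact dephasing channel of strength `2P(1-P) sin²Δ`. -/
theorem comp_overRot_eq_dephasing (P : ℝ) (hP0 : 0 ≤ P) (hP : P < 1 / 2) (Δ : ℝ)
    (ρ : Matrix (Fin 2) (Fin 2) ℂ) :
    compRot P Δ (overRot P Δ ρ) =
      ((1 - 2 * P * (1 - P) * Real.sin Δ ^ 2 : ℝ) : ℂ) • ρ +
        ((2 * P * (1 - P) * Real.sin Δ ^ 2 : ℝ) : ℂ) • (PauliZ * ρ * PauliZ) := by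
  have h1 : Complex.exp (Complex.I * (Δ : ℂ)) =
      Complex.cos Δ + Complex.sin Δ * Complex.I := by
    rw [mul_comm, Complex.exp_mul_I]
  have h2 : Complex.exp (-(Complex.I * (Δ : ℂ))) =
      Complex.cos Δ - Complex.sin Δ * Complex.I := by
    rw [mul_comm, ← neg_mul, ← Complex.ofReal_neg, Complex.exp_mul_I]
    simp [sub_eq_add_neg]
  have hs : Complex.sin Δ ^ 2 + Complex.cos Δ ^ 2 = 1 := Complex.sin_sq_add_cos_sq Δ
  have hI : (Complex.I : ℂ) ^ 2 = -1 := Complex.I_sq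
  set e := Complex.exp (Complex.I * (Δ : ℂ)) with he
  set f := Complex.exp (-(Complex.I * (Δ : ℂ))) with hf
  have hef : e * f = 1 := by rw [he, hf, ← Complex.exp_add]; simp
  have hkey : e ^ 2 + f ^ 2 = 2 - 4 * Complex.sin (Δ : ℂ) ^ 2 := by
    rw [h1, h2]
    linear_combination 2 * hs + 2 * (Complex.sin (Δ : ℂ)) ^ 2 * hI
  simp only [compRot, overRot, exp_smul_pauliZ, neg_neg, ← he, ← hf]
  ext i j
  fin_cases i <;> fin_cases j <;>
    simp [PauliZ, Matrix.mul_apply, Matrix.vecMul, dotProduct, Fin.sum_univ_two, Complex.ofReal_sin]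
  · linear_combination (ρ 0 0 * (2 * (P : ℂ) * (1 - P) + P ^ 2 * (e * f + 1))) * hef
  · linear_combination (ρ 0 1 * (P : ℂ) * (1 - P)) * hkey +
      (ρ 0 1 * (P : ℂ) ^ 2 * (e * f + 1)) * hef
  · linear_combination (ρ 1 0 * (P : ℂ) * (1 - P)) * hkey +
      (ρ 1 0 * (P : ℂ) ^ 2 * (e * f + 1)) * hef
  · linear_combination (ρ 1 1 * (2 * (P : ℂ) * (1 - P) + P ^ 2 * (e * f + 1))) * hef
end
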